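/- Let G and G' be finite multisets of positive integers and let k ≥ 0 satisfy [k] ≤ G + G'. Then there is a partition [k] = S ⊔ T into two disjoint subsets with S ≤ G and T ≤ G'. -/

import Mathlib

/-- `[k] = {1,…,k}` as a finset of positive integers. -/
def bra (k : ℕ) : Finset ℕ+ := (Finset.range k).image (fun i => ⟨i + 1, i.succ_pos⟩)

/-- The domination order on finite multisets of positive integers: `MLE S T` holds iff there
is a submultiset `T'` of `T` that can be matched up with `S` so that each element of `S` is
at most its partner in `T'`. -/
def MLE (S T : Multiset ℕ+) : Prop := ∃ T' ≤ T, Multiset.Rel (· ≤ ·) S T'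

lemma split_le_add {α : Type*} [DecidableEq α] {T G G' : Multiset α} (h : T ≤ G + G') :
    ∃ A B, A ≤ G ∧ B ≤ G' ∧ T = A + B := by
  refine ⟨T ∩ G, T - T ∩ G, (Multiset.inter_le_right : T ∩ G ≤ G), ?_, ?_⟩
  · rw [Multiset.le_iff_count]
    intro a
    have hc := Multiset.le_iff_count.mp h a
    simp only [Multiset.count_sub, Multiset.count_inter, Multiset.count_add] at *
    omega
  · rw [add_comm, tsub_add_cancel_of_le (Multiset.inter_le_left : T ∩ G ≤ T)]

/-- If `[k] ≤ G + G'` then `[k]` can be partitioned as `S ⊔ T` with `S ≤ G` and `T ≤ G'`. -/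
theorem stmt_3 (G G' : Multiset ℕ+) (k : ℕ) (h : MLE (bra k).val (G + G')) :
    ∃ S T : Finset ℕ+, Disjoint S T ∧ S ∪ T = bra k ∧ MLE S.val G ∧ MLE T.val G' := by
  obtain ⟨T', hT', hrel⟩ := h
  obtain ⟨A, B, hA, hB, rfl⟩ := split_le_add hT'
  rw [Multiset.rel_add_right] at hrel
  obtain ⟨S₁, S₂, h1, h2, hsum⟩ := hrel
  have hnodup : (S₁ + S₂).Nodup := hsum ▸ (bra k).nodup
  rw [Multiset.nodup_add] at hnodup
  obtain ⟨n1, n2, hdisj⟩ := hnodup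
  refine ⟨⟨S₁, n1⟩, ⟨S₂, n2⟩, ?_, ?_, ⟨A, hA, h1⟩, ⟨B, hB, h2⟩⟩
  · rw [Finset.disjoint_left]
    intro a ha hb
    exact Multiset.disjoint_left.mp hdisj ha hb
  · ext a
    rw [Finset.mem_union]
    simp only [Finset.mem_mk]
    rw [← Multiset.mem_add, ← hsum, Finset.mem_val]
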